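/- Let v ∈ ℝ²ⁿ, and let S₁ < S₂ be symmetric matrices with U = S₂ − S₁. If Sg_{𝒮₁,𝒮₂}(v) ≥ 0, then there exists a symmetric matrix S with S₁ ≤ S ≤ S₂ and x ∈ ℝⁿ such that v = (x, Sx). -/

import Mathlib

open Matrix

/-- The standard symplectic form on ℝ²ⁿ = ℝⁿ × ℝⁿ. -/
def omegaForm {n : ℕ} (u v : (Fin n → ℝ) × (Fin n → ℝ)) : ℝ :=
  v.2 ⬝ᵥ u.1 - u.2 ⬝ᵥ v.1

lemma vecMulVec_mulVec' {n : ℕ} (w y : Fin n → ℝ) :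
    vecMulVec w w *ᵥ y = (w ⬝ᵥ y) • w := by
  ext i
  simp only [mulVec, dotProduct, vecMulVec_apply, Pi.smul_apply, smul_eq_mul,
    Finset.sum_mul]
  exact Finset.sum_congr rfl fun j _ => by ring

lemma vecMulVec_symm' {n : ℕ} (w : Fin n → ℝ) : (vecMulVec w w).IsSymm := by
  ext i j
  simp [vecMulVec_apply, Matrix.transpose_apply, mul_comm]

theorem stmt9 (n : ℕ) (S₁ S₂ : Matrix (Fin n) (Fin n) ℝ)
    (hS₁ : S₁.IsSymm) (hS₂ : S₂.IsSymm) (hU : (S₂ - S₁).PosDef)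
    (v : (Fin n → ℝ) × (Fin n → ℝ)) (x₁ x₂ : Fin n → ℝ)
    (hdecomp : v = (x₁, S₁ *ᵥ x₁) + (x₂, S₂ *ᵥ x₂))
    (hsg : 0 ≤ omegaForm (x₁, S₁ *ᵥ x₁) (x₂, S₂ *ᵥ x₂)) :
    ∃ (S : Matrix (Fin n) (Fin n) ℝ) (x : Fin n → ℝ), S.IsSymm ∧
      (S - S₁).PosSemidef ∧ (S₂ - S).PosSemidef ∧ v = (x, S *ᵥ x) := by
  by_cases hx₂ : x₂ = 0
  · refine ⟨S₁, x₁, hS₁, by simpa using Matrix.PosSemidef.zero, hU.posSemidef, ?_⟩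
    simp [hdecomp, hx₂, Prod.ext_iff]
  set U := S₂ - S₁ with hUdef
  have hUsymm : U.IsSymm := hS₂.sub hS₁
  set w := U *ᵥ x₂ with hw
  -- symmetric pairing facts
  have pair : ∀ y : Fin n → ℝ, x₂ ⬝ᵥ (U *ᵥ y) = w ⬝ᵥ y := by
    intro y
    rw [dotProduct_mulVec, hw, ← mulVec_transpose, hUsymm]
  have hc : 0 < x₂ ⬝ᵥ w := by
    have := hU.dotProduct_mulVec_pos hx₂
    simpa [star_trivial, hw] using this
  have hSg : 0 ≤ x₁ ⬝ᵥ w := by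
    unfold omegaForm at hsg
    simp only at hsg
    have h1 : (S₂ *ᵥ x₂) ⬝ᵥ x₁ = x₁ ⬝ᵥ (S₂ *ᵥ x₂) := dotProduct_comm _ _
    have h2 : (S₁ *ᵥ x₁) ⬝ᵥ x₂ = x₁ ⬝ᵥ (S₁ *ᵥ x₂) := by
      rw [dotProduct_comm, dotProduct_mulVec, ← mulVec_transpose, hS₁, dotProduct_comm]
    have : x₁ ⬝ᵥ w = (S₂ *ᵥ x₂) ⬝ᵥ x₁ - (S₁ *ᵥ x₁) ⬝ᵥ x₂ := by
      rw [h1, h2, hw, hUdef, sub_mulVec, dotProduct_sub]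
    linarith [hsg, this.ge, this.le]
  set d : ℝ := x₁ ⬝ᵥ w + x₂ ⬝ᵥ w with hd
  have hdpos : 0 < d := by positivity
  refine ⟨S₁ + d⁻¹ • vecMulVec w w, x₁ + x₂, ?_, ?_, ?_, ?_⟩
  · exact hS₁.add ((vecMulVec_symm' w).smul _)
  · -- S - S₁ = d⁻¹ • w wᵀ is PSD
    have hsy : (d⁻¹ • vecMulVec w w).IsSymm := (vecMulVec_symm' w).smul _
    have heq : (S₁ + d⁻¹ • vecMulVec w w - S₁) = d⁻¹ • vecMulVec w w := by abel
    rw [heq]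
    refine posSemidef_iff_dotProduct_mulVec.mpr ⟨?_, ?_⟩
    · rw [Matrix.IsHermitian, conjTranspose_eq_transpose_of_trivial]
      exact hsy
    · intro y
      simp only [star_trivial, smul_mulVec, dotProduct_smul, vecMulVec_mulVec',
        dotProduct_smul, smul_eq_mul]
      have hcomm : y ⬝ᵥ w = w ⬝ᵥ y := dotProduct_comm _ _
      rw [hcomm]
      exact mul_nonneg (inv_nonneg.mpr hdpos.le) (mul_self_nonneg _)
  · -- S₂ - S = U - d⁻¹ • w wᵀ is PSD
    have key : (S₂ - (S₁ + d⁻¹ • vecMulVec w w)) = U - d⁻¹ • vecMulVec w w := by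
      rw [hUdef]; abel
    rw [key]
    refine posSemidef_iff_dotProduct_mulVec.mpr ⟨?_, ?_⟩
    · rw [Matrix.IsHermitian, conjTranspose_eq_transpose_of_trivial]
      exact hUsymm.sub ((vecMulVec_symm' w).smul _)
    · intro y
      simp only [star_trivial, sub_mulVec, dotProduct_sub, smul_mulVec,
        dotProduct_smul, vecMulVec_mulVec', smul_eq_mul, sub_nonneg]
      -- Cauchy–Schwarz via discriminant
      have hquad : ∀ t : ℝ, 0 ≤ (x₂ ⬝ᵥ w) * (t * t) + (2 * (w ⬝ᵥ y)) * t + y ⬝ᵥ (U *ᵥ y) := by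
        intro t
        have h0 := hU.posSemidef.dotProduct_mulVec_nonneg (y + t • x₂)
        simp only [star_trivial, mulVec_add, mulVec_smul, dotProduct_add, add_dotProduct,
          smul_dotProduct, dotProduct_smul, smul_eq_mul, ← hw] at h0
        have e1 : x₂ ⬝ᵥ (U *ᵥ y) = w ⬝ᵥ y := pair y
        have e2 : y ⬝ᵥ w = w ⬝ᵥ y := dotProduct_comm _ _
        rw [e1, e2] at h0
        nlinarith [h0]
      have hdisc := discrim_le_zero hquad
      have hUy : 0 ≤ y ⬝ᵥ (U *ᵥ y) := by
        have := hU.posSemidef.dotProduct_mulVec_nonneg y; simpa [star_trivial] using this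
      have hcs : (w ⬝ᵥ y) ^ 2 ≤ (x₂ ⬝ᵥ w) * (y ⬝ᵥ (U *ᵥ y)) := by
        unfold discrim at hdisc; nlinarith [hdisc]
      have hcd : x₂ ⬝ᵥ w ≤ d := by rw [hd]; linarith
      have h1 : (w ⬝ᵥ y) ^ 2 ≤ d * (y ⬝ᵥ (U *ᵥ y)) := by nlinarith
      have hcomm : y ⬝ᵥ w = w ⬝ᵥ y := dotProduct_comm _ _
      rw [hcomm, show d⁻¹ * (w ⬝ᵥ y * (w ⬝ᵥ y)) = (w ⬝ᵥ y) ^ 2 / d by rw [sq]; ring,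
        div_le_iff₀ hdpos]
      nlinarith [h1]
  · rw [hdecomp]
    have hwx : w ⬝ᵥ (x₁ + x₂) = d := by
      rw [dotProduct_add, hd, dotProduct_comm w x₁, dotProduct_comm w x₂]
    refine Prod.ext rfl ?_
    simp only [Prod.mk_add_mk, Prod.snd]
    rw [add_mulVec, smul_mulVec, vecMulVec_mulVec', hwx, mulVec_add, smul_smul,
      inv_mul_cancel₀ hdpos.ne', one_smul, hw, hUdef, sub_mulVec]
    abel
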